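/- In the deterministic saddle point setup below, for every x ∈ X with H(x) ≤ 0 componentwise and every λ ∈ ℝ^M with λ ≥ 0 componentwise: Σ_{t=1}^T (F(x_t) − F(x)) + ⟨λ, Σ_{t=1}^T H(x_t)⟩ − (δεT/2 + 1/(2ε)) ‖λ‖² ≤ (1/(2ε)) ‖x_1 − x‖² + εTK/2. -/

import Mathlib

open scoped InnerProductSpace



section Aux

variable {E : Type*} [NormedAddCommGroup E] [InnerProductSpace ℝ E]

/-- Convexity inequality via the gradient. -/
lemma convex_grad_ineq [CompleteSpace E] (f : E → ℝ) (hconv : ConvexOn ℝ Set.univ f)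
    (hdiff : Differentiable ℝ f) (a b : E) :
    f a + ⟪gradient f a, b - a⟫_ℝ ≤ f b := by
  set c : ℝ → E := fun s => a + s • (b - a) with hc
  have hcd : HasDerivAt c (b - a) 0 := by
    simpa [hc] using ((hasDerivAt_id (0:ℝ)).smul_const (b - a)).const_add a
  have hc0 : c 0 = a := by simp [hc]
  have hfa : HasFDerivAt f (fderiv ℝ f a) (c 0) := hc0.symm ▸ (hdiff a).hasFDerivAt
  have hfd : HasDerivAt (f ∘ c) ((fderiv ℝ f a) (b - a)) 0 :=
    hfa.comp_hasDerivAt 0 hcd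
  have hgconv : ConvexOn ℝ Set.univ (f ∘ c) := by
    have : ConvexOn ℝ ((AffineMap.lineMap a b : ℝ →ᵃ[ℝ] E) ⁻¹' Set.univ)
        (f ∘ (AffineMap.lineMap a b : ℝ →ᵃ[ℝ] E)) := hconv.comp_affineMap _
    convert this using 2 <;> simp [hc, AffineMap.lineMap_apply]
    · ext s; simp [AffineMap.lineMap_apply]; module
  have hslope := hgconv.le_slope_of_hasDerivAt (Set.mem_univ 0) (Set.mem_univ 1)
    one_pos hfd
  rw [slope_def_field] at hslope
  have hgrad : ⟪gradient f a, b - a⟫_ℝ = (fderiv ℝ f a) (b - a) := by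
    rw [gradient, InnerProductSpace.toDual_symm_apply]
  simp only [Function.comp, hc] at hslope
  simp only [zero_smul, add_zero, one_smul] at hslope
  have hab : a + (b - a) = b := by abel
  rw [hab] at hslope
  rw [hgrad]
  nlinarith [hslope]

/-- Projection onto convex set is contractive toward set points. -/
lemma proj_contract {X : Set E} (hXconv : Convex ℝ X) (hXne : X.Nonempty)
    (P : E → E) (hP : ∀ y, P y ∈ X ∧ ∀ w ∈ X, ‖y - P y‖ ≤ ‖y - w‖)
    (y : E) {w : E} (hw : w ∈ X) : ‖P y - w‖ ≤ ‖y - w‖ := by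
  haveI : Nonempty X := hXne.to_subtype
  have hinf : ‖y - P y‖ = ⨅ z : X, ‖y - z‖ := by
    apply le_antisymm
    · exact le_ciInf fun z => (hP y).2 z z.2
    · exact ciInf_le ⟨0, by rintro r ⟨z, rfl⟩; positivity⟩ (⟨P y, (hP y).1⟩ : X)
  have hang := (norm_eq_iInf_iff_real_inner_le_zero hXconv (hP y).1).mp hinf w hw
  have hexp : ‖y - w‖^2 = ‖y - P y‖^2 + 2 * ⟪y - P y, P y - w⟫_ℝ + ‖P y - w‖^2 := by
    have h : y - w = (y - P y) + (P y - w) := by abel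
    rw [h, norm_add_sq_real]
  have h2 : ⟪y - P y, P y - w⟫_ℝ = - ⟪y - P y, w - P y⟫_ℝ := by
    rw [← inner_neg_right]; congr 1; abel
  have h3 : ‖P y - w‖^2 ≤ ‖y - w‖^2 := by nlinarith [sq_nonneg ‖y - P y‖]
  nlinarith [norm_nonneg (P y - w), norm_nonneg (y - w)]

/-- Componentwise positive part is contractive toward nonnegative vectors. -/
lemma posPart_contract {M : ℕ} (v lamv c : EuclideanSpace ℝ (Fin M))
    (hlamv : ∀ e, 0 ≤ lamv e) (hcv : ∀ e, c e = max (v e) 0) :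
    ‖c - lamv‖ ≤ ‖v - lamv‖ := by
  rw [EuclideanSpace.norm_eq, EuclideanSpace.norm_eq]
  apply Real.sqrt_le_sqrt
  apply Finset.sum_le_sum
  intro e _
  have h1 : (c - lamv) e = c e - lamv e := rfl
  have h2 : (v - lamv) e = v e - lamv e := rfl
  rw [h1, h2, Real.norm_eq_abs, Real.norm_eq_abs, sq_abs, sq_abs, hcv e]
  rcases le_or_gt 0 (v e) with h | h
  · rw [max_eq_left h]
  · rw [max_eq_right h.le]
    nlinarith [hlamv e]

/-- Telescoping sum over `Icc 1 N`. -/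
lemma tele_sum (f : ℕ → ℝ) (N : ℕ) :
    ∑ t ∈ Finset.Icc 1 N, (f t - f (t+1)) = f 1 - f (N+1) := by
  induction N with
  | zero => simp
  | succ N ih =>
    rw [Finset.sum_Icc_succ_top (by omega : 1 ≤ N + 1), ih]
    ring

/-- A finite sum of convex functions is convex. -/
lemma convexOn_finset_sum {ι : Type*} (s : Finset ι) (f : ι → E → ℝ)
    (h : ∀ i ∈ s, ConvexOn ℝ Set.univ (f i)) :
    ConvexOn ℝ Set.univ (fun y => ∑ i ∈ s, f i y) := by
  classical
  induction s using Finset.induction_on with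
  | empty => simpa using convexOn_const (0:ℝ) convex_univ
  | insert a s hni ih =>
    simp only [Finset.sum_insert hni]
    exact (h _ (Finset.mem_insert_self _ _)).add
      (ih fun i hi => h i (Finset.mem_insert_of_mem hi))

end Aux

set_option maxHeartbeats 1000000 in
/-- The telescoped per-iteration bound (equation (28)) in the proof of Theorem 1
of the paper, for the deterministic saddle point method. -/
theorem stmt9
    {n M : ℕ} (T : ℕ) (hT : 1 ≤ T)
    (X : Set (EuclideanSpace ℝ (Fin n))) (hXne : X.Nonempty)
    (hXcomp : IsCompact X) (hXconv : Convex ℝ X)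
    (P : EuclideanSpace ℝ (Fin n) → EuclideanSpace ℝ (Fin n))
    (hP : ∀ y, P y ∈ X ∧ ∀ w ∈ X, ‖y - P y‖ ≤ ‖y - w‖)
    (F : EuclideanSpace ℝ (Fin n) → ℝ)
    (hFconv : ConvexOn ℝ Set.univ F) (hFdiff : Differentiable ℝ F)
    (Hc : Fin M → EuclideanSpace ℝ (Fin n) → ℝ)
    (hHconv : ∀ e, ConvexOn ℝ Set.univ (Hc e))
    (hHdiff : ∀ e, Differentiable ℝ (Hc e))
    (Hvec : EuclideanSpace ℝ (Fin n) → EuclideanSpace ℝ (Fin M))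
    (hHvec : ∀ y e, Hvec y e = Hc e y)
    (ε δ : ℝ) (hε : 0 < ε) (hδ : 0 < δ)
    (x : ℕ → EuclideanSpace ℝ (Fin n)) (lam : ℕ → EuclideanSpace ℝ (Fin M))
    (hx1 : x 1 ∈ X) (hlam1 : lam 1 = 0)
    (gx : ℕ → EuclideanSpace ℝ (Fin n))
    (hgx : ∀ t, gx t =
      gradient (fun y => F y + (∑ e, lam t e * Hc e y) - (δ * ε / 2) * ‖lam t‖ ^ 2) (x t))
    (glam : ℕ → EuclideanSpace ℝ (Fin M))
    (hglam : ∀ t, glam t = Hvec (x t) - (δ * ε) • lam t)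
    (hxrec : ∀ t, 1 ≤ t → t ≤ T → x (t + 1) = P (x t - ε • gx t))
    (hlamrec : ∀ t, 1 ≤ t → t ≤ T → ∀ e,
      lam (t + 1) e = max ((lam t + ε • glam t) e) 0)
    (C₁ C₂ : ℝ) (hC₁ : 0 ≤ C₁) (hC₂ : 0 ≤ C₂)
    (hgxb : ∀ t, 1 ≤ t → t ≤ T → ‖gx t‖ ^ 2 ≤ C₁ * (1 + ‖lam t‖ ^ 2))
    (hglamb : ∀ t, 1 ≤ t → t ≤ T → ‖glam t‖ ^ 2 ≤ C₂ + δ ^ 2 * ε ^ 2 * ‖lam t‖ ^ 2)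
    (K : ℝ) (hK : K = C₁ + C₂) (hδK : C₁ + δ ^ 2 * ε ^ 2 ≤ δ)
    :
    ∀ xf ∈ X, (∀ e, Hc e xf ≤ 0) →
      ∀ lamv : EuclideanSpace ℝ (Fin M), (∀ e, 0 ≤ lamv e) →
        (∑ t ∈ Finset.Icc 1 T, (F (x t) - F xf))
            + ⟪lamv, ∑ t ∈ Finset.Icc 1 T, Hvec (x t)⟫_ℝ
            - (δ * ε * T / 2 + 1 / (2 * ε)) * ‖lamv‖ ^ 2
          ≤ (1 / (2 * ε)) * ‖x 1 - xf‖ ^ 2 + ε * T * K / 2 := by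
  intro xf hxf hHxf lamv hlamv
  -- nonnegativity of the multipliers
  have hlamnn : ∀ t, 1 ≤ t → t ≤ T + 1 → ∀ e, 0 ≤ lam t e := by
    intro t
    induction t with
    | zero => omega
    | succ t ih =>
      intro _ h2 e
      rcases Nat.eq_zero_or_pos t with rfl | ht
      · rw [hlam1]; rfl
      · rw [hlamrec t ht (by omega) e]; exact le_max_right _ _
  -- per-step inequality
  have key : ∀ t, 1 ≤ t → t ≤ T →
      F (x t) - F xf + ⟪lamv, Hvec (x t)⟫_ℝ ≤
        δ * ε / 2 * ‖lamv‖^2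
        + 1/(2*ε) * (‖x t - xf‖^2 - ‖x (t+1) - xf‖^2)
        + 1/(2*ε) * (‖lam t - lamv‖^2 - ‖lam (t+1) - lamv‖^2)
        + ε * K / 2 := by
    intro t ht1 ht2
    have h2e : (0:ℝ) < 2 * ε := by linarith
    -- primal step
    have hA2 : ‖x (t+1) - xf‖^2 ≤
        ‖x t - xf‖^2 - 2*ε*⟪gx t, x t - xf⟫_ℝ + ε^2*‖gx t‖^2 := by
      have hxpr : ‖x (t+1) - xf‖ ≤ ‖x t - ε • gx t - xf‖ := by
        rw [hxrec t ht1 ht2]; exact proj_contract hXconv hXne P hP _ hxf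
      have hsq : ‖x (t+1) - xf‖^2 ≤ ‖x t - ε • gx t - xf‖^2 :=
        pow_le_pow_left₀ (norm_nonneg _) hxpr 2
      have hre : x t - ε • gx t - xf = (x t - xf) - ε • gx t := by abel
      have hexp : ‖(x t - xf) - ε • gx t‖^2
          = ‖x t - xf‖^2 - 2*ε*⟪gx t, x t - xf⟫_ℝ + ε^2*‖gx t‖^2 := by
        rw [norm_sub_sq_real, real_inner_smul_right, norm_smul, Real.norm_eq_abs,
          abs_of_pos hε, mul_pow, real_inner_comm (x t - xf) (gx t)]
        ring
      rw [hre, hexp] at hsq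
      exact hsq
    have hAr : ⟪gx t, x t - xf⟫_ℝ ≤
        1/(2*ε) * (‖x t - xf‖^2 - ‖x (t+1) - xf‖^2) + ε/2*‖gx t‖^2 := by
      have h : ⟪gx t, x t - xf⟫_ℝ ≤
          (‖x t - xf‖^2 - ‖x (t+1) - xf‖^2 + ε^2*‖gx t‖^2) / (2*ε) := by
        rw [le_div_iff₀ h2e]; nlinarith [hA2]
      have heq : (‖x t - xf‖^2 - ‖x (t+1) - xf‖^2 + ε^2*‖gx t‖^2) / (2*ε)
          = 1/(2*ε) * (‖x t - xf‖^2 - ‖x (t+1) - xf‖^2) + ε/2*‖gx t‖^2 := by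
        field_simp
      rw [heq] at h; exact h
    -- convexity step
    have hΦconv : ConvexOn ℝ Set.univ
        (fun y => F y + (∑ e, lam t e * Hc e y) - (δ * ε / 2) * ‖lam t‖ ^ 2) := by
      have hs : ConvexOn ℝ Set.univ (fun y => ∑ e, lam t e * Hc e y) := by
        apply convexOn_finset_sum
        intro e _
        have := (hHconv e).smul (hlamnn t ht1 (by omega) e)
        simpa [smul_eq_mul] using this
      exact (hFconv.add hs).sub (concaveOn_const _ convex_univ)
    have hΦdiff : Differentiable ℝ
        (fun y => F y + (∑ e, lam t e * Hc e y) - (δ * ε / 2) * ‖lam t‖ ^ 2) := by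
      apply Differentiable.sub_const
      apply hFdiff.add
      apply Differentiable.fun_sum
      intro e _
      exact (hHdiff e).const_mul _
    have hBineq := convex_grad_ineq _ hΦconv hΦdiff (x t) xf
    rw [← hgx t] at hBineq
    have hB : F (x t) + (∑ e, lam t e * Hc e (x t)) - (δ * ε / 2) * ‖lam t‖ ^ 2
        + ⟪gx t, xf - x t⟫_ℝ
        ≤ F xf + (∑ e, lam t e * Hc e xf) - (δ * ε / 2) * ‖lam t‖ ^ 2 := hBineq
    have hB2 : ⟪gx t, xf - x t⟫_ℝ = - ⟪gx t, x t - xf⟫_ℝ := by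
      rw [← inner_neg_right]; congr 1; abel
    -- inner products as sums
    have hiVt : ⟪lam t, Hvec (x t)⟫_ℝ = ∑ e, lam t e * Hc e (x t) := by
      rw [PiLp.inner_apply]
      exact Finset.sum_congr rfl fun e _ => by
        rw [RCLike.inner_apply, conj_trivial, hHvec, mul_comm]
    -- dual concavity step
    have hglamexp : ⟪glam t, lamv - lam t⟫_ℝ =
        ⟪Hvec (x t), lamv⟫_ℝ - ⟪Hvec (x t), lam t⟫_ℝ
        - δ*ε*⟪lam t, lamv⟫_ℝ + δ*ε*‖lam t‖^2 := by
      rw [hglam t, inner_sub_left, inner_sub_right, inner_sub_right,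
        real_inner_smul_left, real_inner_smul_left, real_inner_self_eq_norm_sq]
      ring
    have hnormexp : ‖lamv - lam t‖^2 = ‖lamv‖^2 - 2*⟪lamv, lam t⟫_ℝ + ‖lam t‖^2 :=
      norm_sub_sq_real _ _
    have hcomm1 : ⟪Hvec (x t), lamv⟫_ℝ = ⟪lamv, Hvec (x t)⟫_ℝ := real_inner_comm _ _
    have hcomm2 : ⟪Hvec (x t), lam t⟫_ℝ = ⟪lam t, Hvec (x t)⟫_ℝ := real_inner_comm _ _
    have hcomm3 : ⟪lam t, lamv⟫_ℝ = ⟪lamv, lam t⟫_ℝ := real_inner_comm _ _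
    have hC : ⟪lamv, Hvec (x t)⟫_ℝ - δ*ε/2*‖lamv‖^2
        - ⟪lam t, Hvec (x t)⟫_ℝ + δ*ε/2*‖lam t‖^2 ≤ ⟪glam t, lamv - lam t⟫_ℝ := by
      have hkey : 0 ≤ δ*ε*(‖lamv‖^2 - 2*⟪lamv, lam t⟫_ℝ + ‖lam t‖^2) := by
        rw [← hnormexp]; positivity
      rw [hglamexp, hcomm1, hcomm2, hcomm3]
      nlinarith [hkey]
    -- dual step
    have hD2 : ‖lam (t+1) - lamv‖^2 ≤
        ‖lam t - lamv‖^2 - 2*ε*⟪glam t, lamv - lam t⟫_ℝ + ε^2*‖glam t‖^2 := by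
      have hlampr : ‖lam (t+1) - lamv‖ ≤ ‖lam t + ε • glam t - lamv‖ :=
        posPart_contract _ lamv _ hlamv (fun e => hlamrec t ht1 ht2 e)
      have hsq : ‖lam (t+1) - lamv‖^2 ≤ ‖lam t + ε • glam t - lamv‖^2 :=
        pow_le_pow_left₀ (norm_nonneg _) hlampr 2
      have hre : lam t + ε • glam t - lamv = (lam t - lamv) + ε • glam t := by abel
      have hflip : ⟪lam t - lamv, glam t⟫_ℝ = - ⟪glam t, lamv - lam t⟫_ℝ := by
        rw [real_inner_comm, ← inner_neg_right]; congr 1; abel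
      have hexp : ‖(lam t - lamv) + ε • glam t‖^2
          = ‖lam t - lamv‖^2 - 2*ε*⟪glam t, lamv - lam t⟫_ℝ + ε^2*‖glam t‖^2 := by
        rw [norm_add_sq_real, real_inner_smul_right, norm_smul,
          Real.norm_eq_abs, abs_of_pos hε, mul_pow, hflip]
        ring
      rw [hre, hexp] at hsq
      exact hsq
    have hDr : ⟪glam t, lamv - lam t⟫_ℝ ≤
        1/(2*ε) * (‖lam t - lamv‖^2 - ‖lam (t+1) - lamv‖^2) + ε/2*‖glam t‖^2 := by
      have h : ⟪glam t, lamv - lam t⟫_ℝ ≤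
          (‖lam t - lamv‖^2 - ‖lam (t+1) - lamv‖^2 + ε^2*‖glam t‖^2) / (2*ε) := by
        rw [le_div_iff₀ h2e]; nlinarith [hD2]
      have heq : (‖lam t - lamv‖^2 - ‖lam (t+1) - lamv‖^2 + ε^2*‖glam t‖^2) / (2*ε)
          = 1/(2*ε) * (‖lam t - lamv‖^2 - ‖lam (t+1) - lamv‖^2) + ε/2*‖glam t‖^2 := by
        field_simp
      rw [heq] at h; exact h
    -- gradient norm bounds
    have hL : (0:ℝ) ≤ ‖lam t‖^2 := sq_nonneg _
    have hg1 := hgxb t ht1 ht2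
    have hg2 := hglamb t ht1 ht2
    have h3 := mul_le_mul_of_nonneg_right hδK hL
    have hgrad : ε/2*‖gx t‖^2 + ε/2*‖glam t‖^2 ≤ ε*K/2 + δ*ε/2*‖lam t‖^2 := by
      have he2 : (0:ℝ) ≤ ε/2 := by linarith
      nlinarith [mul_le_mul_of_nonneg_left hg1 he2,
        mul_le_mul_of_nonneg_left hg2 he2,
        mul_le_mul_of_nonneg_left h3 he2]
    -- feasibility term
    have hSf : (∑ e, lam t e * Hc e xf) ≤ 0 := by
      apply Finset.sum_nonpos
      intro e _
      exact mul_nonpos_of_nonneg_of_nonpos (hlamnn t ht1 (by omega) e) (hHxf e)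
    linarith [hB, hAr, hDr, hC, hgrad, hSf, hB2, hiVt]
  -- sum up
  have hsum := Finset.sum_le_sum
    (fun t ht => key t (Finset.mem_Icc.mp ht).1 (Finset.mem_Icc.mp ht).2)
  have hsl : ∑ t ∈ Finset.Icc 1 T, (F (x t) - F xf + ⟪lamv, Hvec (x t)⟫_ℝ)
      = (∑ t ∈ Finset.Icc 1 T, (F (x t) - F xf))
        + ⟪lamv, ∑ t ∈ Finset.Icc 1 T, Hvec (x t)⟫_ℝ := by
    rw [inner_sum, ← Finset.sum_add_distrib]
  have t1 : ∑ t ∈ Finset.Icc 1 T, (‖x t - xf‖^2 - ‖x (t+1) - xf‖^2)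
      = ‖x 1 - xf‖^2 - ‖x (T+1) - xf‖^2 := tele_sum (fun s => ‖x s - xf‖^2) T
  have t2 : ∑ t ∈ Finset.Icc 1 T, (‖lam t - lamv‖^2 - ‖lam (t+1) - lamv‖^2)
      = ‖lam 1 - lamv‖^2 - ‖lam (T+1) - lamv‖^2 := tele_sum (fun s => ‖lam s - lamv‖^2) T
  have hsr : ∑ t ∈ Finset.Icc 1 T,
        (δ * ε / 2 * ‖lamv‖^2
        + 1/(2*ε) * (‖x t - xf‖^2 - ‖x (t+1) - xf‖^2)
        + 1/(2*ε) * (‖lam t - lamv‖^2 - ‖lam (t+1) - lamv‖^2)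
        + ε * K / 2)
      = (T:ℝ) * (δ * ε / 2 * ‖lamv‖^2)
        + 1/(2*ε) * (‖x 1 - xf‖^2 - ‖x (T+1) - xf‖^2)
        + 1/(2*ε) * (‖lam 1 - lamv‖^2 - ‖lam (T+1) - lamv‖^2)
        + (T:ℝ) * (ε * K / 2) := by
    have t1' : ∑ t ∈ Finset.Icc 1 T, (1/(2*ε) * (‖x t - xf‖^2 - ‖x (t+1) - xf‖^2))
        = 1/(2*ε) * (‖x 1 - xf‖^2 - ‖x (T+1) - xf‖^2) := by
      rw [← Finset.mul_sum, t1]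
    have t2' : ∑ t ∈ Finset.Icc 1 T, (1/(2*ε) * (‖lam t - lamv‖^2 - ‖lam (t+1) - lamv‖^2))
        = 1/(2*ε) * (‖lam 1 - lamv‖^2 - ‖lam (T+1) - lamv‖^2) := by
      rw [← Finset.mul_sum, t2]
    rw [Finset.sum_add_distrib, Finset.sum_add_distrib, Finset.sum_add_distrib,
      t1', t2', Finset.sum_const, Finset.sum_const, Nat.card_Icc]
    simp [nsmul_eq_mul]
  rw [hsl, hsr] at hsum
  have hv1 : ‖lam 1 - lamv‖^2 = ‖lamv‖^2 := by
    rw [hlam1, zero_sub, norm_neg]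
  rw [hv1] at hsum
  have p1 : (0:ℝ) ≤ 1/(2*ε) * ‖x (T+1) - xf‖^2 := by positivity
  have p2 : (0:ℝ) ≤ 1/(2*ε) * ‖lam (T+1) - lamv‖^2 := by positivity
  have hexp1 : 1/(2*ε) * (‖x 1 - xf‖^2 - ‖x (T+1) - xf‖^2)
      = 1/(2*ε) * ‖x 1 - xf‖^2 - 1/(2*ε) * ‖x (T+1) - xf‖^2 := by ring
  have hexp2 : 1/(2*ε) * (‖lamv‖^2 - ‖lam (T+1) - lamv‖^2)
      = 1/(2*ε) * ‖lamv‖^2 - 1/(2*ε) * ‖lam (T+1) - lamv‖^2 := by ring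
  rw [hexp1, hexp2] at hsum
  nlinarith [hsum, p1, p2]
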